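/- Let η : [0,T] → ℝ≥0 be continuous, A ≥ 0, K ≥ 0, and suppose η(t) ≤ A + K ∫_0^t η(s) ds for all t ∈ [0,T]. Suppose moreover a family η_{a,b}(t) := ∫_a^b u(t,x) dx satisfies η_{a,b}(t) ≤ η⁰_{a−Lt, b+Lt} + K ∫_0^t η_{-1,1}(s) ds for all a < b, where η⁰_{a,b} = ∫_a^b u(0,x) dx, u ≥ 0 and u(0,·) ∈ L¹. Then η_{a,b}(t) ≤ η⁰_{a−Lt, b+Lt} · e^{Kt} for all a < b with (a,b) ⊇ (-1 − Lt, 1 + Lt). -/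
import Mathlib


open MeasureTheory

/-- Gronwall-type propagation estimate combining finite speed of propagation
with a nonlocal source term. -/
theorem stmt19 (T A K L : ℝ) (hT : 0 < T) (hA : 0 ≤ A) (hK : 0 ≤ K) (hL : 0 < L)
    (η : ℝ → ℝ) (hηc : ContinuousOn η (Set.Icc 0 T)) (hη0 : ∀ t ∈ Set.Icc 0 T, 0 ≤ η t)
    (hηg : ∀ t ∈ Set.Icc 0 T, η t ≤ A + K * ∫ s in (0:ℝ)..t, η s)
    (u : ℝ → ℝ → ℝ) (hum : Measurable (Function.uncurry u))
    (hu0 : ∀ t x, 0 ≤ u t x)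
    (huint : Integrable (fun x => u 0 x))
    (hfam : ∀ a b : ℝ, a < b → ∀ t ∈ Set.Icc 0 T,
      (∫ x in a..b, u t x) ≤ (∫ x in (a - L * t)..(b + L * t), u 0 x) +
        K * ∫ s in (0:ℝ)..t, ∫ x in (-1:ℝ)..(1:ℝ), u s x) :
    ∀ a b : ℝ, a < b → ∀ t ∈ Set.Icc 0 T, a ≤ -1 - L * t → 1 + L * t ≤ b →
      (∫ x in a..b, u t x) ≤
        (∫ x in (a - L * t)..(b + L * t), u 0 x) * Real.exp (K * t) := by
  intro a b hab t ht ha hb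
  obtain ⟨ht0, htT⟩ := ht
  have hLt : 0 ≤ L * t := mul_nonneg hL.le ht0
  set φ : ℝ → ℝ := fun s => ∫ x in (-1:ℝ)..(1:ℝ), u s x with hφ
  set D : ℝ := ∫ x in (a - L * t)..(b + L * t), u 0 x with hD
  set C : ℝ := ∫ x in (-1 - L * t)..(1 + L * t), u 0 x with hC
  have hφnn : ∀ s, 0 ≤ φ s := fun s =>
    intervalIntegral.integral_nonneg (by norm_num) (fun x _ => hu0 s x)
  have hDnn : 0 ≤ D :=
    intervalIntegral.integral_nonneg (by linarith) (fun x _ => hu0 0 x)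
  have hCD : C ≤ D := by
    apply intervalIntegral.integral_mono_interval (by linarith) (by linarith) (by linarith)
    · filter_upwards with x using hu0 0 x
    · exact huint.intervalIntegrable
  have hexp1 : 1 ≤ Real.exp (K * t) :=
    Real.one_le_exp (mul_nonneg hK ht0)
  -- main bound from hfam
  have hmain := hfam a b hab t ⟨ht0, htT⟩
  -- the source bound for the reference interval, for each s ∈ [0, t]
  have hsrc : ∀ s ∈ Set.Icc 0 t, φ s ≤ C + K * ∫ r in (0:ℝ)..s, φ r := by
    intro s hs
    have h1 := hfam (-1) 1 (by norm_num) s ⟨hs.1, hs.2.trans htT⟩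
    have h2 : (∫ x in (-1 - L * s)..(1 + L * s), u 0 x) ≤ C := by
      have hLs : 0 ≤ L * s := mul_nonneg hL.le hs.1
      have hLst : L * s ≤ L * t := mul_le_mul_of_nonneg_left hs.2 hL.le
      apply intervalIntegral.integral_mono_interval (by linarith) (by linarith) (by linarith)
      · filter_upwards with x using hu0 0 x
      · exact huint.intervalIntegrable
    calc φ s ≤ (∫ x in (-1 - L * s)..(1 + L * s), u 0 x) + K * ∫ r in (0:ℝ)..s, φ r := by
            simpa using h1
      _ ≤ C + K * ∫ r in (0:ℝ)..s, φ r := by linarith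
  rcases eq_or_lt_of_le hK with hK0 | hKpos
  · -- K = 0
    rw [← hK0] at hmain ⊢
    simpa using hmain.trans (by nlinarith [Real.one_le_exp (le_of_eq (zero_mul t).symm)])
  -- K > 0
  by_cases hint : IntervalIntegrable φ volume 0 t
  · -- φ is integrable on [0,t]; run Gronwall on the primitive I
    set I : ℝ → ℝ := fun s => ∫ r in (0:ℝ)..s, φ r with hI
    have huIcc : Set.uIcc (0:ℝ) t = Set.Icc 0 t := Set.uIcc_of_le ht0
    have hIcont : ContinuousOn I (Set.Icc 0 t) := by
      have := intervalIntegral.continuousOn_primitive_interval' hint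
        (by rw [huIcc]; exact Set.left_mem_Icc.2 ht0)
      rwa [huIcc] at this
    have hintsub : ∀ x z : ℝ, 0 ≤ x → x ≤ z → z ≤ t → IntervalIntegrable φ volume x z := by
      intro x z hx hxz hz
      exact hint.mono_set (by
        rw [huIcc]
        exact Set.uIcc_subset_Icc ⟨hx, by linarith⟩ ⟨by linarith, hz⟩)
    have hImono : ∀ x z, 0 ≤ x → x ≤ z → z ≤ t → I x ≤ I z := by
      intro x z hx hxz hzt
      have hadd : I x + ∫ r in x..z, φ r = I z :=
        intervalIntegral.integral_add_adjacent_intervals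
          (hintsub 0 x le_rfl hx (by linarith)) (hintsub x z hx hxz hzt)
      have : 0 ≤ ∫ r in x..z, φ r :=
        intervalIntegral.integral_nonneg hxz (fun r _ => hφnn r)
      linarith
    have hIbound : ∀ s ∈ Set.Icc (0:ℝ) t,
        I s ≤ gronwallBound 0 K C (s - 0) := by
      apply le_gronwallBound_of_liminf_deriv_right_le (f' := fun x => K * I x + C) hIcont
      · -- liminf right slope bound
        intro x hx r hr
        apply Filter.Eventually.frequently
        have hxt : x < t := hx.2
        have hx0 : 0 ≤ x := hx.1
        have hev : ∀ᶠ z in nhdsWithin x (Set.Ioi x), z ∈ Set.Ioo x t :=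
          Ioo_mem_nhdsGT_of_mem ⟨le_rfl, hxt⟩
        have htend : Filter.Tendsto (fun z => K * I z + C) (nhdsWithin x (Set.Ioi x))
            (nhds (K * I x + C)) := by
          have h1 : Filter.Tendsto I (nhdsWithin x (Set.Icc 0 t)) (nhds (I x)) :=
            (hIcont x ⟨hx0, hxt.le⟩).tendsto
          have h2 : nhdsWithin x (Set.Ioi x) ≤ nhdsWithin x (Set.Icc 0 t) := by
            rw [← nhdsWithin_Ioo_eq_nhdsGT hxt]
            exact nhdsWithin_mono x (fun z hz => ⟨by linarith [hz.1], hz.2.le⟩)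
          exact (((h1.mono_left h2).const_mul K).add tendsto_const_nhds)
        have hlt : ∀ᶠ z in nhdsWithin x (Set.Ioi x), K * I z + C < r :=
          htend.eventually_lt_const hr
        filter_upwards [hev, hlt] with z hz hzr
        have hxz : x < z := hz.1
        have hzt : z ≤ t := hz.2.le
        -- I z - I x = ∫_x^z φ ≤ (z - x) * (C + K * I z)
        have hadd : I x + ∫ r in x..z, φ r = I z :=
          intervalIntegral.integral_add_adjacent_intervals
            (hintsub 0 x le_rfl hx0 hxt.le) (hintsub x z hx0 hxz.le hzt)
        have hbd : (∫ s in x..z, φ s) ≤ (z - x) * (K * I z + C) := by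
          have : (∫ s in x..z, φ s) ≤ ∫ _ in x..z, (K * I z + C) := by
            apply intervalIntegral.integral_mono_on hxz.le (hintsub x z hx0 hxz.le hzt)
              intervalIntegrable_const
            intro s hs
            have h1 := hsrc s ⟨by linarith [hs.1], by linarith [hs.2]⟩
            have h2 : I s ≤ I z := hImono s z (by linarith [hs.1]) hs.2 hzt
            have := hφnn s
            calc φ s ≤ C + K * I s := h1
              _ ≤ K * I z + C := by nlinarith
          calc (∫ s in x..z, φ s) ≤ ∫ _ in x..z, (K * I z + C) := this
            _ = (z - x) * (K * I z + C) := by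
                rw [intervalIntegral.integral_const, smul_eq_mul]
        have hzx : (0:ℝ) < z - x := by linarith
        rw [inv_mul_lt_iff₀ hzx]
        calc I z - I x = ∫ s in x..z, φ s := by linarith
          _ ≤ (z - x) * (K * I z + C) := hbd
          _ < (z - x) * r := by nlinarith
      · simp [hI]
      · intro x _; linarith [hφnn x]
    have hIt := hIbound t ⟨ht0, le_rfl⟩
    rw [sub_zero, gronwallBound_of_K_ne_0 (ne_of_gt hKpos)] at hIt
    simp only [zero_mul, zero_add] at hIt
    have hKI : K * I t ≤ C * (Real.exp (K * t) - 1) := by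
      have := mul_le_mul_of_nonneg_left hIt hK
      calc K * I t ≤ K * (C / K * (Real.exp (K * t) - 1)) := this
        _ = C * (Real.exp (K * t) - 1) := by field_simp
    calc (∫ x in a..b, u t x) ≤ D + K * I t := hmain
      _ ≤ D + C * (Real.exp (K * t) - 1) := by linarith
      _ ≤ D + D * (Real.exp (K * t) - 1) := by nlinarith
      _ = D * Real.exp (K * t) := by ring
  · -- φ not integrable: the interval integral is 0
    have hz : (∫ s in (0:ℝ)..t, φ s) = 0 := intervalIntegral.integral_undef hint
    rw [hz, mul_zero, add_zero] at hmain
    nlinarith
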